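/- Let n, n_c, n_r be natural numbers with n_c + n_r ≤ n. On a probability space, let (x_i)_{i ∈ Fin n} be mutually independent Bool-valued random variables such that x_i = false almost surely for i in a set R of size n_r, x_i = true almost surely for i in a set C of size n_c disjoint from R, and P(x_i = true) = 1/2 for the remaining n − n_c − n_r indices. Then E[Σ_{i,j ∈ Fin n} 1{x_i ≠ x_j}] = (1/2)·[(n − n_c − n_r)(n + n_c + n_r − 1) + 4·n_c·n_r]. -/

import Mathlib

open MeasureTheory ProbabilityTheory Finset

/-- Computation of `E[W 0]` in the proof of Theorem 2: with `n_r` rejectors (opinion 0),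
`n_c` consentors (opinion 1) and `n - n_c - n_r` independent Bernoulli(1/2) opinions, the
expected total pairwise disagreement (over ordered pairs) equals
`((n - n_c - n_r)(n + n_c + n_r - 1) + 4 n_c n_r) / 2`. -/
theorem stmt_11 {Ω : Type*} {m0 : MeasurableSpace Ω} (μ : Measure Ω) [IsProbabilityMeasure μ]
    (n n_c n_r : ℕ) (hcr : n_c + n_r ≤ n)
    (x : Fin n → Ω → Bool) (hmeas : ∀ i, Measurable (x i))
    (hind : iIndepFun (m := fun _ => ⊤) x μ)
    (R C : Finset (Fin n)) (hR : R.card = n_r) (hC : C.card = n_c) (hRC : Disjoint R C)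
    (hr : ∀ i ∈ R, ∀ᵐ ω ∂μ, x i ω = false)
    (hc : ∀ i ∈ C, ∀ᵐ ω ∂μ, x i ω = true)
    (hf : ∀ i, i ∉ R → i ∉ C → μ {ω | x i ω = true} = 1 / 2) :
    ∫ ω, (∑ i : Fin n, ∑ j : Fin n, if x i ω ≠ x j ω then (1 : ℝ) else 0) ∂μ
      = (((n : ℝ) - n_c - n_r) * ((n : ℝ) + n_c + n_r - 1) + 4 * n_c * n_r) / 2 := by
  classical
  have hms : ∀ i j : Fin n, MeasurableSet {ω | x i ω ≠ x j ω} := by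
    intro i j
    have h1 : MeasurableSet {ω | x i ω = true} := by
      have he : {ω | x i ω = true} = x i ⁻¹' {true} := rfl
      rw [he]; exact (hmeas i) (measurableSet_singleton true)
    have h2 : MeasurableSet {ω | x j ω = true} := by
      have he : {ω | x j ω = true} = x j ⁻¹' {true} := rfl
      rw [he]; exact (hmeas j) (measurableSet_singleton true)
    have : {ω | x i ω ≠ x j ω} =
        ({ω | x i ω = true} ∩ {ω | x j ω = true}ᶜ) ∪ ({ω | x i ω = true}ᶜ ∩ {ω | x j ω = true}) := by
      ext ω
      cases hxi : x i ω <;> cases hxj : x j ω <;>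
        simp [Set.mem_setOf_eq, hxi, hxj]
    rw [this]
    exact (h1.inter h2.compl).union (h1.compl.inter h2)
  set p : Fin n → Fin n → ℝ := fun i j => (μ {ω | x i ω ≠ x j ω}).toReal with hp
  have hind_eq : ∀ i j : Fin n,
      (fun ω => if x i ω ≠ x j ω then (1:ℝ) else 0)
        = Set.indicator {ω | x i ω ≠ x j ω} 1 := by
    intro i j; funext ω
    by_cases h : x i ω ≠ x j ω <;> simp [Set.indicator, h]
  have key : ∀ i j : Fin n, ∫ ω, (if x i ω ≠ x j ω then (1:ℝ) else 0) ∂μ = p i j := by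
    intro i j
    rw [hind_eq i j, integral_indicator_one (hms i j)]
    rfl
  have hint : ∀ i j : Fin n,
      Integrable (fun ω => if x i ω ≠ x j ω then (1:ℝ) else 0) μ := by
    intro i j
    rw [hind_eq i j]
    exact (integrable_const (1:ℝ)).indicator (hms i j)
  have hswap : ∫ ω, (∑ i : Fin n, ∑ j : Fin n, if x i ω ≠ x j ω then (1 : ℝ) else 0) ∂μ
      = ∑ i : Fin n, ∑ j : Fin n, p i j := by
    rw [integral_finset_sum _ (fun i _ => integrable_finset_sum _ (fun j _ => hint i j))]
    refine Finset.sum_congr rfl fun i _ => ?_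
    rw [integral_finset_sum _ (fun j _ => hint i j)]
    exact Finset.sum_congr rfl fun j _ => key i j
  rw [hswap]
  -- symmetry
  have psymm : ∀ i j, p i j = p j i := by
    intro i j
    simp only [hp]
    congr 2
    ext ω
    exact ne_comm
  -- zero cases
  have pzero : ∀ i j, (∀ᵐ ω ∂μ, x i ω = x j ω) → p i j = 0 := by
    intro i j h
    have h0 : μ {ω | x i ω ≠ x j ω} = 0 := by
      have := ae_iff.mp h
      simpa [Ne] using this
    simp [hp, h0]
  have pdiag : ∀ i, p i i = 0 := fun i =>
    pzero i i (Filter.Eventually.of_forall fun ω => rfl)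
  have pRR : ∀ i ∈ R, ∀ j ∈ R, p i j = 0 := by
    intro i hi j hj
    exact pzero i j (((hr i hi).and (hr j hj)).mono fun ω ⟨h1, h2⟩ => by rw [h1, h2])
  have pCC : ∀ i ∈ C, ∀ j ∈ C, p i j = 0 := by
    intro i hi j hj
    exact pzero i j (((hc i hi).and (hc j hj)).mono fun ω ⟨h1, h2⟩ => by rw [h1, h2])
  have pRC : ∀ i ∈ R, ∀ j ∈ C, p i j = 1 := by
    intro i hi j hj
    have hne : ∀ᵐ ω ∂μ, x i ω ≠ x j ω :=
      ((hr i hi).and (hc j hj)).mono fun ω ⟨h1, h2⟩ => by rw [h1, h2]; simp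
    have h1 : μ {ω | x i ω ≠ x j ω} = 1 := by
      rw [← prob_compl_eq_zero_iff (hms i j)] 
      have := ae_iff.mp hne
      simpa [Set.compl_setOf] using this
    simp [hp, h1]
  -- the half case: i is a follower, i ≠ j
  have phalf : ∀ i j : Fin n, i ∉ R → i ∉ C → i ≠ j → p i j = 1/2 := by
    intro i j hiR hiC hij
    have hIndep : IndepFun (x i) (x j) μ := hind.indepFun hij
    have htop : ∀ s : Set Bool, MeasurableSet[⊤] s := fun s => trivial
    have hit : μ (x i ⁻¹' {true}) = 1/2 := by
      have : x i ⁻¹' {true} = {ω | x i ω = true} := by ext ω; simp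
      rw [this]; exact hf i hiR hiC
    have hcompl : ∀ k : Fin n, x k ⁻¹' {false} = (x k ⁻¹' {true})ᶜ := by
      intro k; ext ω; simp
    have hjmeas : MeasurableSet (x j ⁻¹' {true}) := (hmeas j) (by trivial)
    have himeas : MeasurableSet (x i ⁻¹' {true}) := (hmeas i) (by trivial)
    have hif : μ (x i ⁻¹' {false}) = 1/2 := by
      rw [hcompl, measure_compl himeas (measure_ne_top μ _), measure_univ, hit]
      exact ENNReal.sub_half ENNReal.one_ne_top
    have hdecomp : {ω | x i ω ≠ x j ω}
        = (x i ⁻¹' {true} ∩ x j ⁻¹' {false}) ∪ (x i ⁻¹' {false} ∩ x j ⁻¹' {true}) := by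
      ext ω
      cases hxi : x i ω <;> cases hxj : x j ω <;> simp [Set.mem_setOf_eq, hxi, hxj]
    have hdisj : Disjoint (x i ⁻¹' {true} ∩ x j ⁻¹' {false})
        (x i ⁻¹' {false} ∩ x j ⁻¹' {true}) := by
      apply Set.disjoint_left.mpr
      rintro ω ⟨h1, _⟩ ⟨h2, _⟩
      simp only [Set.mem_preimage, Set.mem_singleton_iff] at h1 h2
      rw [h1] at h2; exact Bool.noConfusion h2
    have hmB : MeasurableSet (x i ⁻¹' {false} ∩ x j ⁻¹' {true}) := by
      rw [hcompl]; exact himeas.compl.inter hjmeas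
    have hm1 : μ (x i ⁻¹' {true} ∩ x j ⁻¹' {false})
        = μ (x i ⁻¹' {true}) * μ (x j ⁻¹' {false}) :=
      hIndep.measure_inter_preimage_eq_mul _ _ (htop _) (htop _)
    have hm2 : μ (x i ⁻¹' {false} ∩ x j ⁻¹' {true})
        = μ (x i ⁻¹' {false}) * μ (x j ⁻¹' {true}) :=
      hIndep.measure_inter_preimage_eq_mul _ _ (htop _) (htop _)
    have hsum : μ (x j ⁻¹' {false}) + μ (x j ⁻¹' {true}) = 1 := by
      rw [hcompl, add_comm, measure_add_measure_compl hjmeas, measure_univ]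
    have hμ : μ {ω | x i ω ≠ x j ω} = 1/2 := by
      rw [hdecomp, measure_union hdisj hmB, hm1, hm2, hit, hif, ← mul_add, hsum, mul_one]
    simp only [hp, hμ]
    rw [ENNReal.toReal_div]
    norm_num
  -- splitting the index set
  set Fr : Finset (Fin n) := univ \ (R ∪ C) with hFr
  have hdRCF : Disjoint (R ∪ C) Fr := Finset.disjoint_sdiff
  have hRF : Disjoint R Fr := hdRCF.mono_left Finset.subset_union_left
  have hCF : Disjoint C Fr := hdRCF.mono_left Finset.subset_union_right
  have hunion : (R ∪ C) ∪ Fr = univ := Finset.union_sdiff_of_subset (Finset.subset_univ _)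
  have hsplit : ∀ g : Fin n → ℝ,
      ∑ i : Fin n, g i = ∑ i ∈ R, g i + ∑ i ∈ C, g i + ∑ i ∈ Fr, g i := by
    intro g
    rw [← Finset.sum_union hRC, ← Finset.sum_union hdRCF, hunion]
  have hFrR : ∀ i ∈ Fr, i ∉ R := by
    intro i hi
    simp only [hFr, Finset.mem_sdiff, Finset.mem_union] at hi
    exact fun h => hi.2 (Or.inl h)
  have hFrC : ∀ i ∈ Fr, i ∉ C := by
    intro i hi
    simp only [hFr, Finset.mem_sdiff, Finset.mem_union] at hi
    exact fun h => hi.2 (Or.inr h)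
  have hFrcard : (Fr.card : ℝ) = (n : ℝ) - n_c - n_r := by
    have h1 : Fr.card = n - (n_r + n_c) := by
      rw [hFr, Finset.card_sdiff_of_subset (Finset.subset_univ _), Finset.card_univ, Fintype.card_fin,
        Finset.card_union_of_disjoint hRC, hR, hC]
    rw [h1, Nat.cast_sub (by omega)]
    push_cast; ring
  -- inner sums
  have sumR : ∀ i ∈ R, ∑ j : Fin n, p i j = (n_c : ℝ) + (Fr.card : ℝ) / 2 := by
    intro i hi
    rw [hsplit]
    have h1 : ∑ j ∈ R, p i j = 0 := Finset.sum_eq_zero fun j hj => pRR i hi j hj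
    have h2 : ∑ j ∈ C, p i j = (n_c : ℝ) := by
      rw [Finset.sum_congr rfl (fun j hj => pRC i hi j hj), Finset.sum_const, hC]
      simp
    have h3 : ∑ j ∈ Fr, p i j = (Fr.card : ℝ) / 2 := by
      rw [Finset.sum_congr rfl (fun j hj =>
        (psymm i j).trans (phalf j i (hFrR j hj) (hFrC j hj)
          (fun h => (hFrR j hj) (h ▸ hi))))]
      rw [Finset.sum_const]
      simp [div_eq_mul_inv]
    rw [h1, h2, h3]; ring
  have sumC : ∀ i ∈ C, ∑ j : Fin n, p i j = (n_r : ℝ) + (Fr.card : ℝ) / 2 := by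
    intro i hi
    rw [hsplit]
    have h1 : ∑ j ∈ R, p i j = (n_r : ℝ) := by
      rw [Finset.sum_congr rfl (fun j hj => (psymm i j).trans (pRC j hj i hi)),
        Finset.sum_const, hR]
      simp
    have h2 : ∑ j ∈ C, p i j = 0 := Finset.sum_eq_zero fun j hj => pCC i hi j hj
    have h3 : ∑ j ∈ Fr, p i j = (Fr.card : ℝ) / 2 := by
      rw [Finset.sum_congr rfl (fun j hj =>
        (psymm i j).trans (phalf j i (hFrR j hj) (hFrC j hj)
          (fun h => (hFrC j hj) (h ▸ hi))))]
      rw [Finset.sum_const]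
      simp [div_eq_mul_inv]
    rw [h1, h2, h3]; ring
  have sumF : ∀ i ∈ Fr, ∑ j : Fin n, p i j
      = (n_r : ℝ) / 2 + (n_c : ℝ) / 2 + ((Fr.card : ℝ) - 1) / 2 := by
    intro i hi
    rw [hsplit]
    have h1 : ∑ j ∈ R, p i j = (n_r : ℝ) / 2 := by
      rw [Finset.sum_congr rfl (fun j hj =>
        phalf i j (hFrR i hi) (hFrC i hi) (fun h => (hFrR i hi) (h ▸ hj))),
        Finset.sum_const, hR]
      simp [div_eq_mul_inv]
    have h2 : ∑ j ∈ C, p i j = (n_c : ℝ) / 2 := by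
      rw [Finset.sum_congr rfl (fun j hj =>
        phalf i j (hFrR i hi) (hFrC i hi) (fun h => (hFrC i hi) (h ▸ hj))),
        Finset.sum_const, hC]
      simp [div_eq_mul_inv]
    have h3 : ∑ j ∈ Fr, p i j = ((Fr.card : ℝ) - 1) / 2 := by
      rw [← Finset.add_sum_erase _ _ hi, pdiag, zero_add]
      rw [Finset.sum_congr rfl (fun j hj =>
        phalf i j (hFrR i hi) (hFrC i hi)
          (fun h => (Finset.ne_of_mem_erase hj) h.symm)),
        Finset.sum_const, Finset.card_erase_of_mem hi]
      rw [nsmul_eq_mul, Nat.cast_sub (Finset.card_pos.mpr ⟨i, hi⟩)]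
      push_cast
      ring
    rw [h1, h2, h3]
  -- put everything together
  rw [hsplit (fun i => ∑ j : Fin n, p i j)]
  rw [Finset.sum_congr rfl sumR, Finset.sum_congr rfl sumC, Finset.sum_congr rfl sumF]
  rw [Finset.sum_const, Finset.sum_const, Finset.sum_const, hR, hC]
  simp only [nsmul_eq_mul]
  rw [hFrcard]
  ring
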